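/- Every involution τ in PL⁻(S¹), the set of orientation-reversing piecewise linear homeomorphisms of the circle, is conjugate in PL(S¹) to the reflection s : z ↦ z̄. -/

import Mathlib

open Set Real Filter

/-- A function `ℝ → ℝ` is piecewise linear: its set of break points is locally
finite, and off the break points the function is locally affine. -/
def IsPLFun (f : ℝ → ℝ) : Prop :=
  ∃ B : Set ℝ, (∀ r : ℝ, (B ∩ Set.Icc (-r) r).Finite) ∧
    ∀ x ∉ B, ∃ a b : ℝ, ∀ᶠ y in nhds x, f y = a * y + b

/-- `F : ℝ → ℝ` is a lift of the circle map `f` with degree `k`. -/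
def IsLift (f : Circle → Circle) (F : ℝ → ℝ) (k : ℝ) : Prop :=
  (∀ x : ℝ, f (Circle.exp (2 * π * x)) = Circle.exp (2 * π * F x)) ∧
    ∀ x : ℝ, F (x + 1) = F x + k

/-- orientation-preserving piecewise linear homeomorphism of the circle -/
def PLplus (f : Circle ≃ₜ Circle) : Prop :=
  ∃ F : ℝ → ℝ, StrictMono F ∧ IsPLFun F ∧ IsLift f F 1

/-- orientation-reversing piecewise linear homeomorphism of the circle -/
def PLminus (f : Circle ≃ₜ Circle) : Prop :=
  ∃ F : ℝ → ℝ, StrictAnti F ∧ IsPLFun F ∧ IsLift f F (-1)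

/-- piecewise linear homeomorphism of the circle -/
def PLcirc (f : Circle ≃ₜ Circle) : Prop := PLplus f ∨ PLminus f



lemma intEq_of_abs_lt {m m' : ℤ} (h : |(m' : ℝ) - m| < 1) : m' = m := by
  have : |(↑(m' - m) : ℝ)| < 1 := by push_cast; simpa using h
  rw [← Int.cast_abs] at this
  have h2 : |m' - m| < 1 := by exact_mod_cast this
  rcases abs_lt.1 h2 with ⟨h3, h4⟩
  omega

lemma circexp_eq {x y : ℝ} : Circle.exp (2*π*x) = Circle.exp (2*π*y) ↔ ∃ m : ℤ, x = y + m := by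
  rw [Circle.exp_eq_exp]
  constructor
  · rintro ⟨m, hm⟩
    refine ⟨m, ?_⟩
    have hπ : (2*π) ≠ 0 := by positivity
    have : 2*π*x = (2*π) * (y + m) := by rw [hm]; ring
    exact mul_left_cancel₀ hπ this
  · rintro ⟨m, hm⟩
    exact ⟨m, by rw [hm]; ring⟩

lemma intValued_const {f : ℝ → ℝ} {s : Set ℝ} (hs : IsPreconnected s)
    (hf : ContinuousOn f s) (hint : ∀ x ∈ s, ∃ m : ℤ, f x = m) :
    ∀ x ∈ s, ∀ y ∈ s, f x = f y := by
  have key : ∀ x ∈ s, ∀ y ∈ s, f x < f y → False := by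
    intro x hx y hy hlt
    rcases hint x hx with ⟨mx, hmx⟩
    rcases hint y hy with ⟨my, hmy⟩
    have hmlt : mx < my := by
      have : (mx:ℝ) < my := by rw [← hmx, ← hmy]; exact hlt
      exact_mod_cast this
    set t : ℝ := mx + 1/2 with ht
    have h1 : f x ≤ t := by rw [hmx]; norm_num [ht]
    have h2 : t ≤ f y := by
      rw [hmy, ht]
      have : (mx:ℝ) + 1 ≤ my := by exact_mod_cast hmlt
      linarith
    rcases hs.intermediate_value hx hy hf (f := f) ⟨h1, h2⟩ with ⟨z, hz, hfz⟩
    rcases hint z hz with ⟨mz, hmz⟩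
    rw [hmz] at hfz
    have h3 : (2:ℝ) * mz = 2 * mx + 1 := by rw [hfz, ht]; ring
    have h4 : (↑(2*mz) : ℝ) = ↑(2*mx + 1) := by push_cast; linarith
    have h5 : 2*mz = 2*mx + 1 := by exact_mod_cast h4
    omega
  intro x hx y hy
  by_contra hne
  rcases Ne.lt_or_gt hne with h | h
  · exact key x hx y hy h
  · exact key y hy x hx h


lemma affine_eventually_eq {a b a' b' y : ℝ}
    (h : ∀ᶠ z in nhds y, a * z + b = a' * z + b') : a = a' ∧ b = b' := by
  have h1 : a * y + b = a' * y + b' := h.self_of_nhds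
  obtain ⟨z, hz, hzy⟩ :=
    ((h.filter_mono (nhdsWithin_le_nhds (s := {y}ᶜ))).and eventually_mem_nhdsWithin).exists
  have hzy' : z ≠ y := hzy
  have ha : a = a' := by
    have : (a - a') * (z - y) = 0 := by ring_nf; nlinarith [h1, hz]
    rcases mul_eq_zero.1 this with h' | h'
    · linarith
    · exact absurd (by linarith : z = y) hzy'
  exact ⟨ha, by rw [ha] at h1; linarith⟩

/-- On an interval free of break points, a "locally affine off B" function is affine. -/
lemma affine_on_Ioo {F : ℝ → ℝ} {B : Set ℝ}
    (hBaff : ∀ x ∉ B, ∃ a b : ℝ, ∀ᶠ y in nhds x, F y = a * y + b)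
    {u v : ℝ} (huv : u < v) (hfree : B ∩ Ioo u v = ∅) :
    ∃ a b : ℝ, ∀ x ∈ Ioo u v, F x = a * x + b := by
  have hnB : ∀ x ∈ Ioo u v, x ∉ B := fun x hx hxB =>
    (by rw [eq_empty_iff_forall_notMem] at hfree; exact hfree x ⟨hxB, hx⟩)
  obtain ⟨x₀, hx₀⟩ : (Ioo u v).Nonempty := nonempty_Ioo.2 huv
  obtain ⟨a, b, hab⟩ := hBaff x₀ (hnB x₀ hx₀)
  refine ⟨a, b, ?_⟩
  set U : Set ℝ := {y | ∀ᶠ z in nhds y, F z = a * z + b} with hU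
  set V : Set ℝ := {y | ∃ a' b', (a' ≠ a ∨ b' ≠ b) ∧ ∀ᶠ z in nhds y, F z = a' * z + b'} with hV
  have hUopen : IsOpen U := isOpen_setOf_eventually_nhds
  have hVopen : IsOpen V := by
    rw [hV]
    have : {y : ℝ | ∃ a' b', (a' ≠ a ∨ b' ≠ b) ∧ ∀ᶠ z in nhds y, F z = a' * z + b'} =
        ⋃ (p : ℝ × ℝ) (_ : p.1 ≠ a ∨ p.2 ≠ b), {y | ∀ᶠ z in nhds y, F z = p.1 * z + p.2} := by
      ext y; simp only [mem_iUnion, mem_setOf_eq]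
      constructor
      · rintro ⟨a', b', h1, h2⟩; exact ⟨(a', b'), h1, h2⟩
      · rintro ⟨⟨a', b'⟩, h1, h2⟩; exact ⟨a', b', h1, h2⟩
    rw [this]
    exact isOpen_iUnion fun p => isOpen_iUnion fun _ => isOpen_setOf_eventually_nhds
  have hcover : Ioo u v ⊆ U ∪ V := by
    intro x hx
    obtain ⟨a', b', h'⟩ := hBaff x (hnB x hx)
    by_cases hsame : a' = a ∧ b' = b
    · left; rw [hU]; simpa [hsame.1, hsame.2] using h'
    · right
      exact ⟨a', b', by tauto, h'⟩
  have hdisj : Ioo u v ∩ (U ∩ V) = ∅ := by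
    rw [eq_empty_iff_forall_notMem]
    rintro y ⟨_, hyU, a', b', hne, h'⟩
    have : a' = a ∧ b' = b := by
      have hev : ∀ᶠ z in nhds y, a' * z + b' = a * z + b := by
        filter_upwards [hyU, h'] with z h1 h2
        rw [← h1, ← h2]
      have := affine_eventually_eq hev
      tauto
    tauto
  by_cases hVempty : (Ioo u v ∩ V).Nonempty
  · exfalso
    have := isPreconnected_Ioo (a := u) (b := v) U V hUopen hVopen hcover ⟨x₀, hx₀, hab⟩ hVempty
    rw [hdisj] at this
    exact this.ne_empty rfl
  · intro x hx
    have hxU : x ∈ U := by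
      rcases hcover hx with h | h
      · exact h
      · exact absurd ⟨x, hx, h⟩ hVempty
    exact hxU.self_of_nhds


section
variable {τ : Circle → Circle} {F : ℝ → ℝ}
variable (hτc : Continuous τ) (hexp : ∀ x : ℝ, τ (Circle.exp (2 * π * x)) = Circle.exp (2 * π * F x))

include hτc hexp in
lemma endpoint_right {a b u v : ℝ} (huv : u < v)
    (haff : ∀ x ∈ Ioo u v, F x = a * x + b) : ∃ m : ℤ, F u = a * u + b + m := by
  have h1 : Tendsto (fun t => τ (Circle.exp (2*π*t))) (nhdsWithin u (Ioi u)) (nhds (τ (Circle.exp (2*π*u)))) := by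
    apply Tendsto.mono_left _ nhdsWithin_le_nhds
    exact (hτc.comp (Circle.exp.continuous.comp (by continuity))).tendsto u
  have h2 : Tendsto (fun t => Circle.exp (2*π*(a*t+b))) (nhdsWithin u (Ioi u))
      (nhds (Circle.exp (2*π*(a*u+b)))) := by
    apply Tendsto.mono_left _ nhdsWithin_le_nhds
    exact (Circle.exp.continuous.comp (by continuity)).tendsto u
  have heq : ∀ᶠ t in nhdsWithin u (Ioi u), τ (Circle.exp (2*π*t)) = Circle.exp (2*π*(a*t+b)) := by
    filter_upwards [Ioo_mem_nhdsGT_of_mem (Set.left_mem_Ico.2 huv)] with t ht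
    rw [hexp t, haff t ht]
  have := tendsto_nhds_unique (h1.congr' heq) h2
  rw [hexp u] at this
  exact circexp_eq.1 this

include hτc hexp in
lemma endpoint_left {a b u v : ℝ} (huv : u < v)
    (haff : ∀ x ∈ Ioo u v, F x = a * x + b) : ∃ m : ℤ, F v = a * v + b + m := by
  have h1 : Tendsto (fun t => τ (Circle.exp (2*π*t))) (nhdsWithin v (Iio v)) (nhds (τ (Circle.exp (2*π*v)))) := by
    apply Tendsto.mono_left _ nhdsWithin_le_nhds
    exact (hτc.comp (Circle.exp.continuous.comp (by continuity))).tendsto v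
  have h2 : Tendsto (fun t => Circle.exp (2*π*(a*t+b))) (nhdsWithin v (Iio v))
      (nhds (Circle.exp (2*π*(a*v+b)))) := by
    apply Tendsto.mono_left _ nhdsWithin_le_nhds
    exact (Circle.exp.continuous.comp (by continuity)).tendsto v
  have heq : ∀ᶠ t in nhdsWithin v (Iio v), τ (Circle.exp (2*π*t)) = Circle.exp (2*π*(a*t+b)) := by
    filter_upwards [Ioo_mem_nhdsLT_of_mem (Set.right_mem_Ioc.2 huv)] with t ht
    rw [hexp t, haff t ht]
  have := tendsto_nhds_unique (h1.congr' heq) h2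
  rw [hexp v] at this
  exact circexp_eq.1 this

end


section
variable {τ : Circle → Circle} {F : ℝ → ℝ} {B : Set ℝ}
variable (hτc : Continuous τ) (hexp : ∀ x : ℝ, τ (Circle.exp (2 * π * x)) = Circle.exp (2 * π * F x))
variable (hBaff : ∀ x ∉ B, ∃ a b : ℝ, ∀ᶠ y in nhds x, F y = a * y + b)

include hτc hexp hBaff in
lemma repair_zero {u v : ℝ} (hfree : B ∩ Ioo u v = ∅) :
    ∃ G : ℝ → ℝ, ContinuousOn G (Icc u v) ∧ ∀ x ∈ Icc u v, ∃ m : ℤ, G x = F x + m := by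
  rcases lt_or_ge u v with huv | hvu
  · obtain ⟨a, b, haff⟩ := affine_on_Ioo hBaff huv hfree
    obtain ⟨mu, hmu⟩ := endpoint_right hτc hexp huv haff
    obtain ⟨mv, hmv⟩ := endpoint_left hτc hexp huv haff
    refine ⟨fun x => a * x + b, (Continuous.continuousOn (by continuity)), ?_⟩
    intro x hx
    rcases eq_or_lt_of_le hx.1 with hxu | hxu
    · exact ⟨-mu, by rw [← hxu] at *; push_cast; linarith [hmu]⟩
    rcases eq_or_lt_of_le hx.2 with hxv | hxv
    · exact ⟨-mv, by rw [hxv] at *; push_cast; linarith [hmv]⟩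
    · exact ⟨0, by rw [haff x ⟨hxu, hxv⟩]; push_cast; ring⟩
  · refine ⟨F, ?_, fun x hx => ⟨0, by push_cast; ring⟩⟩
    have hsub : Icc u v ⊆ {u} := by
      intro x hx
      have : x = u := le_antisymm (hx.2.trans hvu) hx.1
      simp [this]
    exact continuousOn_singleton F u |>.mono hsub

include hτc hexp hBaff in
lemma repair_n : ∀ n : ℕ, ∀ u v : ℝ, (B ∩ Ioo u v).Finite → (B ∩ Ioo u v).ncard ≤ n →
    ∃ G : ℝ → ℝ, ContinuousOn G (Icc u v) ∧ ∀ x ∈ Icc u v, ∃ m : ℤ, G x = F x + m := by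
  intro n
  induction n with
  | zero =>
    intro u v hfin hcard
    exact repair_zero hτc hexp hBaff (by
      rw [← Set.ncard_eq_zero hfin]; omega)
  | succ n ih =>
    intro u v hfin hcard
    rcases eq_empty_or_nonempty (B ∩ Ioo u v) with hempty | ⟨t, htB, htuv⟩
    · exact repair_zero hτc hexp hBaff hempty
    have hsub1 : B ∩ Ioo u t ⊆ (B ∩ Ioo u v) \ {t} := by
      rintro x ⟨hxB, hx⟩
      exact ⟨⟨hxB, hx.1, hx.2.trans htuv.2⟩, by simp; linarith [hx.2]⟩
    have hsub2 : B ∩ Ioo t v ⊆ (B ∩ Ioo u v) \ {t} := by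
      rintro x ⟨hxB, hx⟩
      exact ⟨⟨hxB, htuv.1.trans hx.1, hx.2⟩, by simp; linarith [hx.1]⟩
    have hdfin : ((B ∩ Ioo u v) \ {t}).Finite := hfin.diff
    have hdcard : ((B ∩ Ioo u v) \ {t}).ncard ≤ n := by
      have := Set.ncard_diff_singleton_lt_of_mem (show t ∈ B ∩ Ioo u v from ⟨htB, htuv⟩) hfin
      omega
    obtain ⟨G₁, hG₁c, hG₁m⟩ := ih u t (hdfin.subset hsub1)
      (le_trans (Set.ncard_le_ncard hsub1 hdfin) hdcard)
    obtain ⟨G₂, hG₂c, hG₂m⟩ := ih t v (hdfin.subset hsub2)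
      (le_trans (Set.ncard_le_ncard hsub2 hdfin) hdcard)
    refine ⟨fun x => G₁ (min x t) + G₂ (max x t) - G₂ t, ?_, ?_⟩
    · apply ContinuousOn.sub
      apply ContinuousOn.add
      · apply hG₁c.comp (continuous_min.comp (continuous_id.prodMk continuous_const)).continuousOn
        intro x hx
        exact ⟨le_min hx.1 htuv.1.le, min_le_right _ _⟩
      · apply hG₂c.comp (continuous_max.comp (continuous_id.prodMk continuous_const)).continuousOn
        intro x hx
        exact ⟨le_max_right _ _, max_le hx.2 htuv.2.le⟩
      · exact continuousOn_const
    · intro x hx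
      obtain ⟨m₁, hm₁⟩ := hG₁m t ⟨htuv.1.le, le_refl t⟩
      obtain ⟨m₂, hm₂⟩ := hG₂m t ⟨le_refl t, htuv.2.le⟩
      rcases le_or_gt x t with hxt | hxt
      · obtain ⟨m, hm⟩ := hG₁m x ⟨hx.1, hxt⟩
        refine ⟨m, ?_⟩
        simp only [min_eq_left hxt, max_eq_right hxt]
        rw [hm]; ring
      · obtain ⟨m, hm⟩ := hG₂m x ⟨hxt.le, hx.2⟩
        refine ⟨m₁ + m - m₂, ?_⟩
        simp only [min_eq_right hxt.le, max_eq_left hxt.le]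
        rw [hm, hm₁, hm₂]; push_cast; ring

include hτc hexp hBaff in
lemma repair (hBfin : ∀ r : ℝ, (B ∩ Set.Icc (-r) r).Finite) (u v : ℝ) :
    ∃ G : ℝ → ℝ, ContinuousOn G (Icc u v) ∧ ∀ x ∈ Icc u v, ∃ m : ℤ, G x = F x + m := by
  set r := max |u| |v| with hr
  have hsub : B ∩ Ioo u v ⊆ B ∩ Icc (-r) r := by
    rintro x ⟨hxB, hx⟩
    refine ⟨hxB, ?_, ?_⟩
    · have := neg_abs_le u; have := le_max_left |u| |v|; linarith [hx.1]
    · have := le_abs_self v; have := le_max_right |u| |v|; linarith [hx.2]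
  have hfin : (B ∩ Ioo u v).Finite := (hBfin r).subset hsub
  exact repair_n hτc hexp hBaff (B ∩ Ioo u v).ncard u v hfin le_rfl
end


section
variable {τ : Circle → Circle} {F : ℝ → ℝ}
variable (hτc : Continuous τ) (hτinj : Function.Injective τ)
  (hinv : ∀ z : Circle, τ (τ z) = z)
  (hexp : ∀ x : ℝ, τ (Circle.exp (2 * π * x)) = Circle.exp (2 * π * F x))
  (hF : StrictAnti F) (hFper : ∀ x : ℝ, F (x + 1) = F x - 1)
  {Gh : ℝ → ℝ}
  (hGhc : ContinuousOn Gh (Icc 0 2))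
  (hGhm : ∀ x ∈ Icc (0:ℝ) 2, ∃ m : ℤ, Gh x = F x + m)

include hGhm hexp in
lemma Gh_exp : ∀ x ∈ Icc (0:ℝ) 2, τ (Circle.exp (2*π*x)) = Circle.exp (2*π* Gh x) := by
  intro x hx
  obtain ⟨m, hm⟩ := hGhm x hx
  rw [hexp x]
  exact (circexp_eq.2 ⟨m, hm⟩).symm

include hGhm hexp hτinj in
lemma Gh_injmod : ∀ x ∈ Icc (0:ℝ) 2, ∀ y ∈ Icc (0:ℝ) 2, Gh x = Gh y → ∃ m : ℤ, x = y + m := by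
  intro x hx y hy hxy
  have h1 : τ (Circle.exp (2*π*x)) = τ (Circle.exp (2*π*y)) := by
    rw [Gh_exp hexp hGhm x hx, Gh_exp hexp hGhm y hy, hxy]
  exact circexp_eq.1 (hτinj h1)

include hτc hτinj hexp hF hGhc hGhm in
lemma Gh_antiOn_small : ∀ u v : ℝ, 0 ≤ u → v ≤ 2 → u < v → v - u < 1 →
    StrictAntiOn Gh (Icc u v) := by
  intro u v hu hv huv hlen
  have hIsub : Icc u v ⊆ Icc (0:ℝ) 2 := Icc_subset_Icc hu hv
  have hinj : InjOn Gh (Icc u v) := by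
    intro x hx y hy hxy
    obtain ⟨m, hm⟩ := Gh_injmod hτinj hexp hGhm x (hIsub hx) y (hIsub hy) hxy
    have : (m:ℝ) = x - y := by linarith [hm]
    have hm0 : m = 0 := by
      apply intEq_of_abs_lt (m := 0)
      rw [Int.cast_zero, sub_zero, this, abs_sub_lt_iff]
      constructor <;> [skip; skip] <;>
        · have h1 := hx.1; have h2 := hx.2; have h3 := hy.1; have h4 := hy.2; linarith
    rw [hm0] at hm; push_cast at hm; linarith
  rcases ContinuousOn.strictMonoOn_of_injOn_Icc' huv.le (hGhc.mono hIsub) hinj with hmono | hanti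
  · exfalso
    set DZ : ℝ → ℤ := fun x => ⌊Gh x - F x⌋ with hDZdef
    have hDZ : ∀ x ∈ Icc u v, ((DZ x : ℝ)) = Gh x - F x := by
      intro x hx
      obtain ⟨m, hm⟩ := hGhm x (hIsub hx)
      have : Gh x - F x = (m:ℝ) := by linarith
      rw [hDZdef]; simp only []; rw [this, Int.floor_intCast]
    have hDZmono : StrictMonoOn DZ (Icc u v) := by
      intro x hx y hy hxy
      have h1 : Gh x < Gh y := hmono hx hy hxy
      have h2 : F y < F x := hF hxy
      have : (DZ x : ℝ) < (DZ y : ℝ) := by rw [hDZ x hx, hDZ y hy]; linarith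
      exact_mod_cast this
    have himg : DZ '' Icc u v ⊆ Set.Icc (DZ u) (DZ v) := by
      rintro _ ⟨x, hx, rfl⟩
      have hul : u ∈ Icc u v := ⟨le_refl u, huv.le⟩
      have hvr : v ∈ Icc u v := ⟨huv.le, le_refl v⟩
      constructor
      · rcases eq_or_lt_of_le hx.1 with h | h
        · rw [h]
        · exact (hDZmono hul hx h).le
      · rcases eq_or_lt_of_le hx.2 with h | h
        · rw [h]
        · exact (hDZmono hx hvr h).le
    have hfin : (Icc u v).Finite :=
      Set.Finite.of_finite_image ((Set.finite_Icc (DZ u) (DZ v)).subset himg) hDZmono.injOn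
    exact Set.Icc_infinite huv hfin
  · exact hanti

include hτc hτinj hexp hF hGhc hGhm in
lemma Gh_antiOn : StrictAntiOn Gh (Icc (0:ℝ) 2) := by
  intro x hx y hy hxy
  set z₁ := x + (y - x)/3 with hz₁
  set z₂ := x + 2*(y - x)/3 with hz₂
  have hxz₁ : x < z₁ := by rw [hz₁]; linarith
  have hz₁z₂ : z₁ < z₂ := by rw [hz₁, hz₂]; linarith
  have hz₂y : z₂ < y := by rw [hz₂]; linarith
  have hb : y - x ≤ 2 := by linarith [hx.1, hy.2]
  have h1 : Gh x > Gh z₁ := by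
    refine Gh_antiOn_small hτc hτinj hexp hF hGhc hGhm x z₁ hx.1 (by linarith [hy.2]) hxz₁
      (by rw [hz₁]; linarith) ⟨le_refl x, hxz₁.le⟩ ⟨hxz₁.le, le_refl z₁⟩ hxz₁
  have h2 : Gh z₁ > Gh z₂ := by
    refine Gh_antiOn_small hτc hτinj hexp hF hGhc hGhm z₁ z₂ (by linarith [hx.1])
      (by linarith [hy.2]) hz₁z₂ (by rw [hz₁, hz₂]; linarith) ⟨le_refl z₁, hz₁z₂.le⟩
      ⟨hz₁z₂.le, le_refl z₂⟩ hz₁z₂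
  have h3 : Gh z₂ > Gh y := by
    refine Gh_antiOn_small hτc hτinj hexp hF hGhc hGhm z₂ y (by linarith [hx.1]) hy.2 hz₂y
      (by rw [hz₂]; linarith) ⟨le_refl z₂, hz₂y.le⟩ ⟨hz₂y.le, le_refl y⟩ hz₂y
  linarith

include hτc hτinj hexp hF hFper hGhc hGhm in
lemma Gh_per : ∀ x ∈ Icc (0:ℝ) 1, Gh (x + 1) = Gh x - 1 := by
  have hanti := Gh_antiOn hτc hτinj hexp hF hGhc hGhm
  set K : ℝ → ℝ := fun x => Gh (x+1) - Gh x + 1 with hK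
  have hKc : ContinuousOn K (Icc 0 1) := by
    apply ContinuousOn.add _ continuousOn_const
    apply ContinuousOn.sub
    · apply hGhc.comp (Continuous.continuousOn (by continuity : Continuous (fun x : ℝ => x + 1)))
      intro x hx
      show x + 1 ∈ Icc (0:ℝ) 2
      exact ⟨by linarith [hx.1], by linarith [hx.2]⟩
    · exact hGhc.mono (Icc_subset_Icc le_rfl one_le_two)
  have hKint : ∀ x ∈ Icc (0:ℝ) 1, ∃ m : ℤ, K x = m := by
    intro x hx
    obtain ⟨m, hm⟩ := hGhm x ⟨hx.1, by linarith [hx.2]⟩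
    obtain ⟨m', hm'⟩ := hGhm (x+1) ⟨by linarith [hx.1], by linarith [hx.2]⟩
    refine ⟨m' - m, ?_⟩
    rw [hK]; simp only []
    rw [hm, hm', hFper x]; push_cast; ring
  have hconst := intValued_const isPreconnected_Icc hKc hKint
  have hK0 : K 0 = 0 := by
    obtain ⟨c, hc⟩ := hKint 0 ⟨le_rfl, zero_le_one⟩
    rcases lt_trichotomy c 0 with hneg | hzero | hpos
    · exfalso
      -- Gh 1 ≤ Gh 0 - 2, IVT gives interior point mapping to Gh 0 - 1
      have h1 : Gh (0+1) - Gh 0 + 1 = c := hc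
      have hle : Gh 1 ≤ Gh 0 - 2 := by
        have hc1 : c ≤ -1 := by omega
        have : (c:ℝ) ≤ -1 := by exact_mod_cast hc1
        simp only [zero_add] at h1; linarith
      have hmem : Gh 0 - 1 ∈ Ioo (Gh 1) (Gh 0) := ⟨by linarith, by linarith⟩
      have := intermediate_value_Ioo' (zero_le_one) (hGhc.mono (Icc_subset_Icc le_rfl one_le_two)) hmem
      rcases this with ⟨y, hy, hGy⟩
      have h01 : (0:ℝ) ∈ Icc (0:ℝ) 2 := ⟨le_rfl, by norm_num⟩
      have hy2 : y ∈ Icc (0:ℝ) 2 := ⟨hy.1.le, by linarith [hy.2]⟩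
      have hexpy : τ (Circle.exp (2*π*y)) = τ (Circle.exp (2*π*0)) := by
        rw [Gh_exp hexp hGhm y hy2, Gh_exp hexp hGhm 0 h01, hGy]
        exact circexp_eq.2 ⟨-1, by push_cast; ring⟩
      obtain ⟨m, hm⟩ := circexp_eq.1 (hτinj hexpy)
      have : (m:ℝ) = y := by linarith
      have h1' : (0:ℝ) < m := by rw [this]; exact hy.1
      have h2' : (m:ℝ) < 1 := by rw [this]; exact hy.2
      have h1'' : 0 < m := by exact_mod_cast h1'
      have h2'' : m < 1 := by exact_mod_cast h2'
      omega
    · rw [hc, hzero, Int.cast_zero]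
    · exfalso
      have h1 : Gh (0+1) - Gh 0 + 1 = c := hc
      have : Gh 1 < Gh 0 := hanti ⟨le_rfl, by norm_num⟩ ⟨zero_le_one, one_le_two⟩ zero_lt_one
      have : (c:ℝ) < 1 := by simp only [zero_add] at h1; linarith
      have : c < 1 := by exact_mod_cast this
      omega
  intro x hx
  have := hconst x hx 0 ⟨le_rfl, zero_le_one⟩
  rw [hK0] at this
  have : Gh (x+1) - Gh x + 1 = 0 := this
  linarith
end

section
variable {τ : Circle → Circle} {F : ℝ → ℝ}
variable (hτc : Continuous τ) (hτinj : Function.Injective τ)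
  (hinv : ∀ z : Circle, τ (τ z) = z)
  (hexp : ∀ x : ℝ, τ (Circle.exp (2 * π * x)) = Circle.exp (2 * π * F x))
  (hF : StrictAnti F) (hFper : ∀ x : ℝ, F (x + 1) = F x - 1)
  {Gh : ℝ → ℝ}
  (hGhc : ContinuousOn Gh (Icc 0 2))
  (hGhm : ∀ x ∈ Icc (0:ℝ) 2, ∃ m : ℤ, Gh x = F x + m)

include hτc hτinj hinv hexp hF hFper hGhc hGhm in
lemma normalizeLift : ∃ a b : ℝ, ∃ G : ℝ → ℝ, a < b ∧ b < a + 1 ∧ Continuous G ∧ StrictAnti G ∧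
    G a = a ∧ G b = b - 1 ∧ (∀ x : ℝ, G (x + 1) = G x - 1) ∧ (∀ y ∈ Icc a b, G (G y) = y) ∧
    (∀ x : ℝ, ∃ m : ℤ, G x = F x + m) := by
  have hanti := Gh_antiOn hτc hτinj hexp hF hGhc hGhm
  have hper := Gh_per hτc hτinj hexp hF hFper hGhc hGhm
  have hFint : ∀ (x : ℝ) (n : ℤ), F (x + n) = F x - n := by
    intro x n
    induction n using Int.induction_on with
    | zero => simp
    | succ k ih =>
      push_cast at ih ⊢
      have h2 := hFper (x + (k:ℝ))
      rw [show x + ((k:ℝ) + 1) = (x + (k:ℝ)) + 1 by ring, h2, ih]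
      ring
    | pred k ih =>
      push_cast at ih ⊢
      have h2 := hFper (x + (-(k:ℝ) - 1))
      rw [show x + (-(k:ℝ) - 1) + 1 = x + -(k:ℝ) by ring] at h2
      linarith [h2, ih]
  -- find a and b
  set H : ℝ → ℝ := fun x => Gh x - x with hHdef
  have hHc : ContinuousOn H (Icc 0 1) :=
    (hGhc.mono (Icc_subset_Icc le_rfl one_le_two)).sub continuousOn_id
  have hH1 : H 1 = H 0 - 2 := by
    have := hper 0 ⟨le_rfl, zero_le_one⟩
    simp only [hHdef, zero_add] at *
    linarith
  set k : ℤ := ⌊H 0⌋ with hk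
  have hkle : (k:ℝ) ≤ H 0 := Int.floor_le _
  have hkgt : H 0 - 1 < k := Int.sub_one_lt_floor _
  have hEa : ∃ a ∈ Ico (0:ℝ) 1, H a = k := by
    rcases eq_or_lt_of_le hkle with heq | hlt
    · exact ⟨0, ⟨le_rfl, zero_lt_one⟩, heq.symm⟩
    · have hmem : (k:ℝ) ∈ Ioo (H 1) (H 0) := ⟨by linarith, hlt⟩
      obtain ⟨a, ha, hHa⟩ := intermediate_value_Ioo' zero_le_one hHc hmem
      exact ⟨a, ⟨ha.1.le, ha.2⟩, hHa⟩
  obtain ⟨a, haIco, hHa⟩ := hEa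
  have hEb : ∃ c ∈ Ioo a 1, H c = k - 1 := by
    have hHca : ContinuousOn H (Icc a 1) := hHc.mono (Icc_subset_Icc haIco.1 le_rfl)
    have hmem : (k:ℝ) - 1 ∈ Ioo (H 1) (H a) := ⟨by linarith, by rw [hHa]; linarith⟩
    obtain ⟨c, hc, hHc'⟩ := intermediate_value_Ioo' haIco.2.le hHca hmem
    exact ⟨c, hc, hHc'⟩
  obtain ⟨b, hbIoo, hHb⟩ := hEb
  have hab : a < b := hbIoo.1
  have hb1 : b < 1 := hbIoo.2
  have ha0 : 0 ≤ a := haIco.1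
  have hba1 : b < a + 1 := by linarith
  set G₁ : ℝ → ℝ := fun x => Gh x - k with hG₁def
  have hG₁a : G₁ a = a := by simp only [hG₁def]; simp only [hHdef] at hHa; linarith
  have hG₁b : G₁ b = b - 1 := by simp only [hG₁def]; simp only [hHdef] at hHb; push_cast at hHb; linarith
  have hG₁anti : StrictAntiOn G₁ (Icc 0 2) := by
    intro x hx y hy hxy
    have := hanti hx hy hxy
    simp only [hG₁def]; linarith
  have hG₁per : ∀ x ∈ Icc (0:ℝ) 1, G₁ (x + 1) = G₁ x - 1 := by
    intro x hx
    have := hper x hx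
    simp only [hG₁def]; linarith
  have hG₁m : ∀ x ∈ Icc (0:ℝ) 2, ∃ m : ℤ, G₁ x = F x + m := by
    intro x hx
    obtain ⟨m, hm⟩ := hGhm x hx
    exact ⟨m - k, by simp only [hG₁def]; rw [hm]; push_cast; ring⟩
  -- global extension
  set P : ℝ → ℝ := fun y => G₁ y + y with hPdef
  have hPb : P b = P (b + 1) := by
    have := hG₁per b ⟨by linarith, hb1.le⟩
    simp only [hPdef]; linarith
  set G : ℝ → ℝ := fun x => -x + AddCircle.liftIco 1 b P ((x : ℝ) : AddCircle (1:ℝ)) with hGdef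
  have hGIco : ∀ x ∈ Ico b (b+1), G x = G₁ x := by
    intro x hx
    have := AddCircle.liftIco_coe_apply (f := P) (p := (1:ℝ)) (a := b) (x := x) (by simpa using hx)
    simp only [hGdef]; rw [this]; simp only [hPdef]
    ring
  have hGper : ∀ x : ℝ, G (x + 1) = G x - 1 := by
    intro x
    have hcoe : ((x + 1 : ℝ) : AddCircle (1:ℝ)) = ((x:ℝ) : AddCircle (1:ℝ)) :=
      AddCircle.coe_add_period 1 x
    simp only [hGdef, hcoe]
    ring
  have hGint : ∀ (x : ℝ) (n : ℤ), G (x + n) = G x - n := by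
    intro x n
    induction n using Int.induction_on with
    | zero => simp
    | succ k ih =>
      push_cast at ih ⊢
      have h2 := hGper (x + (k:ℝ))
      rw [show x + ((k:ℝ) + 1) = (x + (k:ℝ)) + 1 by ring, h2, ih]
      ring
    | pred k ih =>
      push_cast at ih ⊢
      have h2 := hGper (x + (-(k:ℝ) - 1))
      rw [show x + (-(k:ℝ) - 1) + 1 = x + -(k:ℝ) by ring] at h2
      linarith [h2, ih]
  have hGc : Continuous G := by
    apply Continuous.add continuous_neg
    apply (AddCircle.liftIco_continuous hPb _).comp (AddCircle.continuous_mk' 1)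
    apply ContinuousOn.add _ continuousOn_id
    apply ContinuousOn.sub _ continuousOn_const
    exact hGhc.mono (Icc_subset_Icc (by linarith) (by linarith))
  have hwin : ∀ x : ℝ, x - (⌊x - b⌋ : ℝ) ∈ Ico b (b + 1) := by
    intro x
    have h1 : (⌊x - b⌋ : ℝ) ≤ x - b := Int.floor_le _
    have h2 : x - b < ⌊x - b⌋ + 1 := Int.lt_floor_add_one _
    constructor <;> [linarith; linarith]
  have hGwin : ∀ x : ℝ, G x = G₁ (x - ⌊x - b⌋) - ⌊x - b⌋ := by
    intro x
    have := hGint (x - ⌊x - b⌋) ⌊x - b⌋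
    rw [show x - (⌊x - b⌋:ℝ) + (⌊x - b⌋:ℝ) = x by ring] at this
    rw [this, hGIco _ (hwin x)]
  have hwin02 : ∀ x : ℝ, x - (⌊x - b⌋ : ℝ) ∈ Icc (0:ℝ) 2 := by
    intro x
    have := hwin x
    exact ⟨by linarith [this.1], by linarith [this.2]⟩
  have hGanti : StrictAnti G := by
    intro x y hxy
    have hnm : ⌊x - b⌋ ≤ ⌊y - b⌋ := Int.floor_le_floor (by linarith)
    rw [hGwin x, hGwin y]
    rcases eq_or_lt_of_le hnm with heq | hlt
    · have h1 : x - (⌊x - b⌋:ℝ) < y - (⌊y - b⌋:ℝ) := by rw [← heq]; linarith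
      have h2 := hG₁anti (hwin02 x) (hwin02 y) h1
      have h3 : ((⌊x - b⌋:ℤ):ℝ) = ((⌊y - b⌋:ℤ):ℝ) := by rw [heq]
      linarith
    · have hb1mem : b + 1 ∈ Icc (0:ℝ) 2 := ⟨by linarith, by linarith⟩
      have h1 : G₁ (b+1) < G₁ (x - ⌊x - b⌋) := hG₁anti (hwin02 x) hb1mem (hwin x).2
      have h2 : G₁ (b+1) = G₁ b - 1 := hG₁per b ⟨by linarith, hb1.le⟩
      have h3 : G₁ (y - ⌊y - b⌋) ≤ G₁ b := by
        rcases eq_or_lt_of_le (hwin y).1 with heq' | hlt'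
        · rw [← heq']
        · exact (hG₁anti ⟨by linarith, by linarith⟩ (hwin02 y) hlt').le
      have h4 : ((⌊x - b⌋:ℤ):ℝ) + 1 ≤ ((⌊y - b⌋:ℤ):ℝ) := by exact_mod_cast hlt
      linarith
  have hGmod : ∀ x : ℝ, ∃ m : ℤ, G x = F x + m := by
    intro x
    obtain ⟨m, hm⟩ := hG₁m (x - ⌊x - b⌋) (hwin02 x)
    have hFx : F (x - ⌊x - b⌋) = F x + ⌊x - b⌋ := by
      have := hFint x (-⌊x - b⌋)
      push_cast at this ⊢
      rw [show x + -(↑⌊x - b⌋:ℝ) = x - ↑⌊x - b⌋ by ring] at this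
      linarith
    exact ⟨m, by rw [hGwin x, hm, hFx]; push_cast; ring⟩
  have hGexp : ∀ x : ℝ, τ (Circle.exp (2*π*x)) = Circle.exp (2*π* G x) := by
    intro x
    obtain ⟨m, hm⟩ := hGmod x
    rw [hexp x]
    exact (circexp_eq.2 ⟨m, hm⟩).symm
  have hGa : G a = a := by
    have h1 : a + 1 ∈ Ico b (b + 1) := ⟨by linarith, by linarith⟩
    have h2 := hGper a
    rw [hGIco _ h1, hG₁per a ⟨ha0, by linarith⟩, hG₁a] at h2
    linarith
  have hGb : G b = b - 1 := by
    rw [hGIco b ⟨le_rfl, by linarith⟩, hG₁b]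
  have hGinv : ∀ y ∈ Icc a b, G (G y) = y := by
    have hKK : ∀ y : ℝ, ∃ m : ℤ, G (G y) - y = m := by
      intro y
      have h1 : Circle.exp (2*π* G (G y)) = Circle.exp (2*π*y) := by
        rw [← hGexp (G y), ← hGexp y, hinv]
      obtain ⟨m, hm⟩ := circexp_eq.1 h1
      exact ⟨m, by linarith⟩
    have hc : ContinuousOn (fun y => G (G y) - y) (Icc a b) :=
      ((hGc.comp hGc).sub continuous_id).continuousOn
    have := intValued_const isPreconnected_Icc hc (fun y _ => hKK y)
    intro y hy
    have h0 := this y hy a ⟨le_rfl, hab.le⟩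
    rw [hGa, hGa] at h0
    simp only [sub_self] at h0
    linarith [h0]
  exact ⟨a, b, G, hab, hba1, hGc, hGanti, hGa, hGb, hGper, hGinv, hGmod⟩
end


noncomputable def coreFun (a b : ℝ) (G : ℝ → ℝ) : ℝ → ℝ :=
  fun u => if u ≤ 0 then G (a + 2*(-u)*(b-a)) else a + 2*u*(b-a)

noncomputable def PhiFun (a b : ℝ) (G : ℝ → ℝ) : ℝ → ℝ :=
  fun t => t + AddCircle.liftIco 1 (-(1/2)) (fun u => coreFun a b G u - u) ((t : ℝ) : AddCircle (1:ℝ))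

section
variable {a b : ℝ} {G : ℝ → ℝ}

lemma coreFun_nonpos {u : ℝ} (h : u ≤ 0) : coreFun a b G u = G (a + 2*(-u)*(b-a)) := if_pos h

lemma coreFun_pos {u : ℝ} (h : 0 < u) : coreFun a b G u = a + 2*u*(b-a) := if_neg (not_le.2 h)

lemma coreFun_nonneg (hGa : G a = a) {u : ℝ} (h : 0 ≤ u) : coreFun a b G u = a + 2*u*(b-a) := by
  rcases eq_or_lt_of_le h with h0 | h0
  · rw [← h0, coreFun_nonpos le_rfl]
    rw [show a + 2*(-(0:ℝ))*(b-a) = a by ring, hGa]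
    ring
  · exact coreFun_pos h0

lemma coreFun_zero (hGa : G a = a) : coreFun a b G 0 = a := by
  rw [coreFun_nonneg hGa le_rfl]; ring

lemma coreFun_half (hGa : G a = a) : coreFun a b G (1/2) = b := by
  rw [coreFun_nonneg hGa (by norm_num)]; ring

lemma coreFun_neghalf (hGb : G b = b - 1) : coreFun a b G (-(1/2)) = b - 1 := by
  rw [coreFun_nonpos (by norm_num), show a + 2*(-(-(1/2)))*(b-a) = b by ring, hGb]

lemma coreFun_cont (hGc : Continuous G) (hGa : G a = a) : Continuous (coreFun a b G) := by
  apply Continuous.if_le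
  · exact hGc.comp (by continuity)
  · continuity
  · exact continuous_id
  · exact continuous_const
  · intro x hx
    rw [hx]
    rw [show a + 2*(-(0:ℝ))*(b-a) = a by ring, hGa]
    ring

lemma coreFun_mono (hab : a < b) (hGanti : StrictAnti G) (hGa : G a = a) :
    StrictMono (coreFun a b G) := by
  intro u v huv
  have hba : 0 < b - a := by linarith
  rcases le_or_gt v 0 with hv | hv
  · rw [coreFun_nonpos (huv.le.trans hv), coreFun_nonpos hv]
    apply hGanti
    nlinarith
  · rw [coreFun_pos hv]
    rcases le_or_gt u 0 with hu | hu
    · rw [coreFun_nonpos hu]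
      have h1 : G (a + 2*(-u)*(b-a)) ≤ a := by
        rcases eq_or_lt_of_le hu with h0 | h0
        · rw [h0]; rw [show a + 2*(-(0:ℝ))*(b-a) = a by ring, hGa]
        · have : a < a + 2*(-u)*(b-a) := by nlinarith
          have := hGanti this
          rw [hGa] at this
          exact this.le
      nlinarith
    · rw [coreFun_pos hu]
      nlinarith

lemma PhiFun_coe (t : ℝ) (ht : t ∈ Ico (-(1/2):ℝ) (1/2)) : PhiFun a b G t = coreFun a b G t := by
  have ht' : t ∈ Ico (-(1/2):ℝ) (-(1/2) + 1) := by
    rw [show (-(1/2):ℝ) + 1 = 1/2 by norm_num]; exact ht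
  rw [PhiFun, AddCircle.liftIco_coe_apply ht']
  ring

lemma PhiFun_per (t : ℝ) : PhiFun a b G (t + 1) = PhiFun a b G t + 1 := by
  have hcoe : ((t + 1 : ℝ) : AddCircle (1:ℝ)) = ((t:ℝ) : AddCircle (1:ℝ)) :=
    AddCircle.coe_add_period 1 t
  rw [PhiFun, PhiFun, hcoe]
  ring

lemma PhiFun_int (t : ℝ) (n : ℤ) : PhiFun a b G (t + n) = PhiFun a b G t + n := by
  induction n using Int.induction_on with
  | zero => simp
  | succ k ih =>
    push_cast at ih ⊢
    have h2 := PhiFun_per (a := a) (b := b) (G := G) (t + (k:ℝ))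
    rw [show t + ((k:ℝ) + 1) = (t + (k:ℝ)) + 1 by ring, h2, ih]
    ring
  | pred k ih =>
    push_cast at ih ⊢
    have h2 := PhiFun_per (a := a) (b := b) (G := G) (t + (-(k:ℝ) - 1))
    rw [show t + (-(k:ℝ) - 1) + 1 = t + -(k:ℝ) by ring] at h2
    linarith

lemma PhiFun_floor (t : ℝ) : t - (⌊t + 1/2⌋ : ℝ) ∈ Ico (-(1/2):ℝ) (1/2) ∧
    PhiFun a b G t = coreFun a b G (t - ⌊t + 1/2⌋) + ⌊t + 1/2⌋ := by
  have h1 : (⌊t + 1/2⌋ : ℝ) ≤ t + 1/2 := Int.floor_le _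
  have h2 : t + 1/2 < ⌊t + 1/2⌋ + 1 := Int.lt_floor_add_one _
  have hmem : t - (⌊t + 1/2⌋ : ℝ) ∈ Ico (-(1/2):ℝ) (1/2) := ⟨by linarith, by linarith⟩
  refine ⟨hmem, ?_⟩
  have := PhiFun_int (a := a) (b := b) (G := G) (t - ⌊t + 1/2⌋) ⌊t + 1/2⌋
  rw [show t - (⌊t + 1/2⌋:ℝ) + (⌊t + 1/2⌋:ℝ) = t by ring] at this
  rw [this, PhiFun_coe _ hmem]

lemma PhiFun_cont (hGc : Continuous G) (hGa : G a = a) (hGb : G b = b - 1) :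
    Continuous (PhiFun a b G) := by
  have hL : Continuous (AddCircle.liftIco 1 (-(1/2)) (fun u => coreFun a b G u - u)) := by
    apply AddCircle.liftIco_continuous
    · rw [show (-(1/2):ℝ) + 1 = 1/2 by norm_num, coreFun_neghalf hGb, coreFun_half hGa]
      ring
    · exact ((coreFun_cont hGc hGa).sub continuous_id).continuousOn
  have hmk : Continuous (fun t : ℝ => ((t:ℝ) : AddCircle (1:ℝ))) := AddCircle.continuous_mk' 1
  exact continuous_id.add (hL.comp hmk)

lemma PhiFun_mono (hab : a < b) (hGanti : StrictAnti G) (hGa : G a = a) (hGb : G b = b - 1) :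
    StrictMono (PhiFun a b G) := by
  have hcm := coreFun_mono hab hGanti hGa
  intro x y hxy
  obtain ⟨hxm, hxf⟩ := PhiFun_floor (a := a) (b := b) (G := G) x
  obtain ⟨hym, hyf⟩ := PhiFun_floor (a := a) (b := b) (G := G) y
  rw [hxf, hyf]
  have hnm : ⌊x + 1/2⌋ ≤ ⌊y + 1/2⌋ := Int.floor_le_floor (by linarith)
  rcases eq_or_lt_of_le hnm with heq | hlt
  · have h3 : ((⌊x + 1/2⌋:ℤ):ℝ) = ((⌊y + 1/2⌋:ℤ):ℝ) := by rw [heq]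
    have h1 : x - (⌊x + 1/2⌋:ℝ) < y - (⌊y + 1/2⌋:ℝ) := by rw [← h3]; linarith
    have := hcm h1
    linarith
  · have h4 : ((⌊x + 1/2⌋:ℤ):ℝ) + 1 ≤ ((⌊y + 1/2⌋:ℤ):ℝ) := by exact_mod_cast hlt
    have h1 : coreFun a b G (x - ⌊x + 1/2⌋) < coreFun a b G (1/2) := hcm hxm.2
    have h2 : coreFun a b G (-(1/2)) ≤ coreFun a b G (y - ⌊y + 1/2⌋) := by
      rcases eq_or_lt_of_le hym.1 with heq' | hlt'
      · rw [← heq']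
      · exact (hcm hlt').le
    have h5 : coreFun a b G (1/2) = coreFun a b G (-(1/2)) + 1 := by
      rw [coreFun_half hGa, coreFun_neghalf hGb]
      ring
    linarith

end

section
variable {a b : ℝ} {G : ℝ → ℝ}

lemma Gint_of_per (hGper : ∀ x : ℝ, G (x + 1) = G x - 1) :
    ∀ (x : ℝ) (n : ℤ), G (x + n) = G x - n := by
  intro x n
  induction n using Int.induction_on with
  | zero => simp
  | succ k ih =>
    push_cast at ih ⊢
    have h2 := hGper (x + (k:ℝ))
    rw [show x + ((k:ℝ) + 1) = (x + (k:ℝ)) + 1 by ring, h2, ih]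
    ring
  | pred k ih =>
    push_cast at ih ⊢
    have h2 := hGper (x + (-(k:ℝ) - 1))
    rw [show x + (-(k:ℝ) - 1) + 1 = x + -(k:ℝ) by ring] at h2
    linarith

lemma PhiFun_key (hab : a < b) (hGanti : StrictAnti G) (hGa : G a = a) (hGb : G b = b - 1)
    (hGper : ∀ x : ℝ, G (x + 1) = G x - 1) (hGinv : ∀ y ∈ Icc a b, G (G y) = y) :
    ∀ t : ℝ, G (PhiFun a b G t) = PhiFun a b G (-t) := by
  have hba : 0 < b - a := by linarith
  have key0 : ∀ t ∈ Ico (-(1/2):ℝ) (1/2), G (PhiFun a b G t) = PhiFun a b G (-t) := by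
    intro t ht
    rw [PhiFun_coe t ht]
    rcases le_or_gt 0 t with h0 | h0
    · rw [coreFun_nonneg hGa h0]
      rw [PhiFun_coe (-t) ⟨by linarith [ht.2], by linarith⟩]
      rw [coreFun_nonpos (by linarith : -t ≤ 0)]
      norm_num
    · rw [coreFun_nonpos h0.le]
      have hc : a + 2*(-t)*(b-a) ∈ Icc a b := by
        constructor
        · nlinarith
        · nlinarith [ht.1]
      rw [hGinv _ hc]
      rcases eq_or_lt_of_le ht.1 with heq | hlt
      · rw [← heq]
        have hPhalf : PhiFun a b G (-(-(1/2))) = b := by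
          rw [show (-(-(1/2)):ℝ) = -(1/2) + 1 by norm_num, PhiFun_per,
            PhiFun_coe _ ⟨le_rfl, by norm_num⟩, coreFun_neghalf hGb]
          ring
        rw [hPhalf]
        ring
      · rw [PhiFun_coe (-t) ⟨by linarith, by linarith⟩, coreFun_pos (by linarith)]
  intro t
  have hfl := PhiFun_floor (a := a) (b := b) (G := G) t
  obtain ⟨hm, _⟩ := hfl
  have h1 : PhiFun a b G t = PhiFun a b G (t - ⌊t + 1/2⌋) + ⌊t + 1/2⌋ := by
    have := PhiFun_int (a := a) (b := b) (G := G) (t - ⌊t + 1/2⌋) ⌊t + 1/2⌋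
    rw [show t - (⌊t + 1/2⌋:ℝ) + (⌊t + 1/2⌋:ℝ) = t by ring] at this
    exact this
  rw [h1, Gint_of_per hGper, key0 _ hm]
  have h2 := PhiFun_int (a := a) (b := b) (G := G) (-(t - ⌊t + 1/2⌋)) (-⌊t + 1/2⌋)
  push_cast at h2
  rw [show -(t - (⌊t + 1/2⌋:ℝ)) + -(⌊t + 1/2⌋:ℝ) = -t by ring] at h2
  rw [h2]
  ring

lemma PhiFun_surj (hGc : Continuous G) (hGa : G a = a) (hGb : G b = b - 1) :
    Function.Surjective (PhiFun a b G) := by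
  intro y
  have hc := PhiFun_cont (a := a) (b := b) hGc hGa hGb
  set n : ℤ := ⌈|y - PhiFun a b G 0|⌉ with hn
  have hn0 : (0:ℝ) ≤ (n:ℝ) := by
    rw [hn]
    exact_mod_cast Int.ceil_nonneg (abs_nonneg _)
  have hnge : |y - PhiFun a b G 0| ≤ (n:ℝ) := by rw [hn]; exact Int.le_ceil _
  have hA : PhiFun a b G (-(n:ℝ)) = PhiFun a b G 0 - n := by
    have := PhiFun_int (a := a) (b := b) (G := G) 0 (-n)
    push_cast at this
    rw [show (0:ℝ) + -(n:ℝ) = -(n:ℝ) by ring] at this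
    rw [this]; ring
  have hB : PhiFun a b G ((n:ℝ)) = PhiFun a b G 0 + n := by
    have := PhiFun_int (a := a) (b := b) (G := G) 0 n
    rw [show (0:ℝ) + (n:ℝ) = (n:ℝ) by ring] at this
    exact this
  have hmem : y ∈ Icc (PhiFun a b G (-(n:ℝ))) (PhiFun a b G ((n:ℝ))) := by
    rw [hA, hB]
    rcases abs_le.1 hnge with ⟨h1, h2⟩
    exact ⟨by linarith, by linarith⟩
  have := intermediate_value_Icc (by linarith : -(n:ℝ) ≤ (n:ℝ)) hc.continuousOn hmem
  obtain ⟨x, _, hx⟩ := this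
  exact ⟨x, hx⟩

lemma PhiFun_PL {F : ℝ → ℝ} {B : Set ℝ}
    (hBfin : ∀ r : ℝ, (B ∩ Icc (-r) r).Finite)
    (hBaff : ∀ x ∉ B, ∃ α β : ℝ, ∀ᶠ y in nhds x, F y = α * y + β)
    (hab : a < b) (hGc : Continuous G) (hGa : G a = a)
    (hGmod : ∀ x : ℝ, ∃ m : ℤ, G x = F x + m) :
    ∃ BΦ : Set ℝ, (∀ r : ℝ, (BΦ ∩ Icc (-r) r).Finite) ∧
      ∀ x ∉ BΦ, ∃ α β : ℝ, ∀ᶠ y in nhds x, PhiFun a b G y = α * y + β := by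
  classical
  set w : ℝ → ℝ := fun u => a + 2*(-u)*(b-a) with hw
  set C : Set ℝ := insert (-(1/2)) (insert 0 {u : ℝ | u ∈ Icc (-(1/2):ℝ) 0 ∧ w u ∈ B}) with hC
  have hba : 0 < b - a := by linarith
  have hwinj : Function.Injective w := by
    intro u v huv
    simp only [hw] at huv
    nlinarith [huv]
  have hCfin : C.Finite := by
    apply Set.Finite.insert
    apply Set.Finite.insert
    have hsub : {u : ℝ | u ∈ Icc (-(1/2):ℝ) 0 ∧ w u ∈ B} ⊆ w ⁻¹' (B ∩ Icc (-(|a|+|b|)) (|a|+|b|)) := by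
      rintro u ⟨hu, huB⟩
      refine ⟨huB, ?_, ?_⟩
      · have h1 : a ≤ w u := by simp only [hw]; nlinarith [hu.2]
        have := neg_abs_le a
        have := abs_nonneg b
        linarith
      · have h2 : w u ≤ b := by simp only [hw]; nlinarith [hu.1]
        have := le_abs_self b
        have := abs_nonneg a
        linarith
    exact ((hBfin (|a|+|b|)).preimage (hwinj.injOn)).subset hsub
  have hCsub : C ⊆ Icc (-(1/2):ℝ) (1/2) := by
    intro c hc
    rcases hc with rfl | hc
    · exact ⟨le_rfl, by norm_num⟩
    rcases hc with rfl | hc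
    · exact ⟨by norm_num, by norm_num⟩
    · exact ⟨hc.1.1, le_trans hc.1.2 (by norm_num)⟩
  set BΦ : Set ℝ := ⋃ (n : ℤ), (fun u => u + (n:ℝ)) '' C with hBΦ
  refine ⟨BΦ, ?_, ?_⟩
  · intro r
    have hsub : BΦ ∩ Icc (-r) r ⊆
        ⋃ n ∈ (Finset.Icc (-(⌈r⌉+1)) (⌈r⌉+1) : Finset ℤ), (fun u => u + (n:ℝ)) '' C := by
      rintro x ⟨hxB, hxI⟩
      rw [hBΦ, mem_iUnion] at hxB
      obtain ⟨n, hn⟩ := hxB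
      obtain ⟨c, hcC, hcx⟩ := hn
      have hcI := hCsub hcC
      have hrceil : r ≤ (⌈r⌉:ℝ) := Int.le_ceil r
      have h1 : ((-(⌈r⌉+1) : ℤ):ℝ) ≤ (n:ℝ) := by
        push_cast
        have := hxI.1; have := hcI.2
        simp only at hcx
        linarith [hcx]
      have h2 : (n:ℝ) ≤ ((⌈r⌉+1 : ℤ):ℝ) := by
        push_cast
        have := hxI.2; have := hcI.1
        simp only at hcx
        linarith [hcx]
      have h1' : -(⌈r⌉+1) ≤ n := by exact_mod_cast h1
      have h2' : n ≤ ⌈r⌉+1 := by exact_mod_cast h2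
      rw [mem_iUnion]
      refine ⟨n, ?_⟩
      rw [mem_iUnion]
      exact ⟨Finset.mem_Icc.2 ⟨h1', h2'⟩, ⟨c, hcC, hcx⟩⟩
    apply Set.Finite.subset _ hsub
    apply Set.Finite.biUnion (Finset.finite_toSet _)
    intro n _
    exact hCfin.image _
  · intro x hxB
    obtain ⟨n, hn⟩ : ∃ n : ℤ, n = ⌊x + 1/2⌋ := ⟨_, rfl⟩
    have hfl : (n:ℝ) ≤ x + 1/2 := by rw [hn]; exact Int.floor_le _
    have hfu : x + 1/2 < (n:ℝ) + 1 := by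
      rw [hn]; push_cast; exact Int.lt_floor_add_one _
    have hnotmem : ∀ c ∈ C, x ≠ c + n := by
      intro c hcC heq
      apply hxB
      rw [hBΦ, mem_iUnion]
      exact ⟨n, ⟨c, hcC, heq.symm⟩⟩
    have hne_half : x - (n:ℝ) ≠ -(1/2) := by
      intro h
      exact hnotmem (-(1/2)) (by rw [hC]; left; rfl) (by linarith)
    have hne0 : x - (n:ℝ) ≠ 0 := by
      intro h
      exact hnotmem 0 (by rw [hC]; right; left; rfl) (by linarith)
    have hu_lb : -(1/2) < x - (n:ℝ) := by
      rcases eq_or_lt_of_le (by linarith : -(1/2) ≤ x - (n:ℝ)) with h | h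
      · exact absurd h.symm hne_half
      · exact h
    have hfloor_ev : ∀ t : ℝ, t ∈ Ioo ((n:ℝ) - 1/2) ((n:ℝ) + 1/2) → ⌊t + 1/2⌋ = n := by
      intro t ht
      rw [Int.floor_eq_iff]
      refine ⟨by linarith [ht.1], by push_cast; linarith [ht.2]⟩
    rcases lt_or_gt_of_ne hne0 with huneg | hupos
    · -- x - n < 0 : G-side branch
      have hqB : w (x - (n:ℝ)) ∉ B := by
        intro h
        exact hnotmem (x - (n:ℝ)) (by
          rw [hC]; right; right
          exact ⟨⟨hu_lb.le, by linarith⟩, h⟩) (by ring)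
      obtain ⟨α, β, haffq⟩ := hBaff _ hqB
      obtain ⟨m₀, hm₀⟩ := hGmod (w (x - (n:ℝ)))
      have hRq : G (w (x - (n:ℝ))) - (α * (w (x - (n:ℝ))) + β) = m₀ := by
        have := haffq.self_of_nhds
        rw [hm₀, this]; ring
      have hGq_ev : ∀ᶠ y in nhds (w (x - (n:ℝ))), G y = α * y + β + m₀ := by
        have hRc : Continuous (fun y => G y - (α * y + β)) :=
          hGc.sub ((continuous_const.mul continuous_id).add continuous_const)
        have hev1 : ∀ᶠ y in nhds (w (x - (n:ℝ))),
            (fun y => G y - (α * y + β)) y ∈ Ioo ((m₀:ℝ) - 1/2) ((m₀:ℝ) + 1/2) := by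
          apply hRc.continuousAt.eventually_mem
          rw [hRq]
          exact Ioo_mem_nhds (by linarith) (by linarith)
        filter_upwards [hev1, haffq] with y h1 h2
        obtain ⟨m, hm⟩ := hGmod y
        have hGy : G y - (α * y + β) = (m:ℝ) := by rw [hm, h2]; ring
        rw [hGy] at h1
        have : m = m₀ := intEq_of_abs_lt (by
          rw [abs_sub_lt_iff]
          constructor <;> [linarith [h1.2]; linarith [h1.1]])
        rw [hm, h2, this]
      have hwt : Continuous (fun t : ℝ => w (t - (n:ℝ))) := by
        simp only [hw]
        exact continuous_const.add ((continuous_const.mul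
          (continuous_id.sub continuous_const).neg).mul continuous_const)
      have hwev : ∀ᶠ t in nhds x, G (w (t - (n:ℝ))) = α * (w (t - (n:ℝ))) + β + m₀ :=
        (hwt.tendsto x).eventually hGq_ev
      refine ⟨-(2*α*(b-a)), α*(a + 2*(b-a)*(n:ℝ)) + β + m₀ + n, ?_⟩
      have hIoo : Ioo ((n:ℝ) - 1/2) ((n:ℝ)) ∈ nhds x :=
        Ioo_mem_nhds (by linarith) (by linarith)
      filter_upwards [hwev, hIoo] with t h3 h4
      have hfn : ⌊t + 1/2⌋ = n := hfloor_ev t ⟨h4.1, by linarith [h4.2]⟩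
      have := (PhiFun_floor (a := a) (b := b) (G := G) t).2
      rw [hfn] at this
      rw [this, coreFun_nonpos (by linarith [h4.2] : t - (n:ℝ) ≤ 0)]
      have harg : a + 2*(-(t - (n:ℝ)))*(b-a) = w (t - (n:ℝ)) := by simp only [hw]
      rw [harg, h3]
      simp only [hw]
      ring
    · -- x - n > 0 : affine branch
      refine ⟨2*(b-a), a - 2*(b-a)*(n:ℝ) + n, ?_⟩
      have hIoo : Ioo ((n:ℝ)) ((n:ℝ) + 1/2) ∈ nhds x :=
        Ioo_mem_nhds (by linarith) (by linarith)
      filter_upwards [hIoo] with t h4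
      have hfn : ⌊t + 1/2⌋ = n := hfloor_ev t ⟨by linarith [h4.1], h4.2⟩
      have := (PhiFun_floor (a := a) (b := b) (G := G) t).2
      rw [hfn] at this
      rw [this, coreFun_pos (by linarith [h4.1] : (0:ℝ) < t - (n:ℝ))]
      ring

end

lemma per_int1 {f : ℝ → ℝ} (h : ∀ x : ℝ, f (x + 1) = f x + 1) :
    ∀ (x : ℝ) (n : ℤ), f (x + n) = f x + n := by
  intro x n
  induction n using Int.induction_on with
  | zero => simp
  | succ k ih =>
    push_cast at ih ⊢
    have h2 := h (x + (k:ℝ))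
    rw [show x + ((k:ℝ) + 1) = (x + (k:ℝ)) + 1 by ring, h2, ih]
    ring
  | pred k ih =>
    push_cast at ih ⊢
    have h2 := h (x + (-(k:ℝ) - 1))
    rw [show x + (-(k:ℝ) - 1) + 1 = x + -(k:ℝ) by ring] at h2
    linarith

/-- Every involution `τ` in `PL⁻(S¹)` is conjugate in `PL(S¹)` to the reflection
`s : z ↦ z̄` (on the circle, `z̄ = z⁻¹`). -/
theorem involution_PLminus_conjugate_to_reflection (τ : Circle ≃ₜ Circle)
    (hτ : PLminus τ) (hinv : ∀ z : Circle, τ (τ z) = z) :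
    ∃ φ : Circle ≃ₜ Circle, PLcirc φ ∧
      ∀ z : Circle, τ z = φ ((φ.symm z)⁻¹) := by
  classical
  obtain ⟨F, hF, ⟨B, hBfin, hBaff⟩, hexpF, hFper'⟩ := hτ
  have hFper : ∀ x : ℝ, F (x + 1) = F x - 1 := fun x => by rw [hFper' x]; ring
  have hτc : Continuous (⇑τ) := τ.continuous
  have hτinj : Function.Injective (⇑τ) := τ.injective
  obtain ⟨Gh, hGhc, hGhm⟩ := repair hτc hexpF hBaff hBfin 0 2
  obtain ⟨a, b, G, hab, hba1, hGc, hGanti, hGa, hGb, hGper, hGinv, hGmod⟩ :=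
    normalizeLift hτc hτinj hinv hexpF hF hFper hGhc hGhm
  have hGexp : ∀ x : ℝ, τ (Circle.exp (2*π*x)) = Circle.exp (2*π* G x) := by
    intro x
    obtain ⟨m, hm⟩ := hGmod x
    rw [hexpF x]
    exact (circexp_eq.2 ⟨m, hm⟩).symm
  set Φ : ℝ → ℝ := PhiFun a b G with hΦdef
  have hΦmono : StrictMono Φ := PhiFun_mono hab hGanti hGa hGb
  have hΦcont : Continuous Φ := PhiFun_cont hGc hGa hGb
  have hΦper : ∀ t : ℝ, Φ (t + 1) = Φ t + 1 := fun t => PhiFun_per t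
  have hΦint : ∀ (t : ℝ) (n : ℤ), Φ (t + n) = Φ t + n := per_int1 hΦper
  have hΦsurj : Function.Surjective Φ := PhiFun_surj hGc hGa hGb
  have hkey : ∀ t : ℝ, G (Φ t) = Φ (-t) := PhiFun_key hab hGanti hGa hGb hGper hGinv
  obtain ⟨BΦ, hBΦfin, hBΦaff⟩ := PhiFun_PL hBfin hBaff hab hGc hGa hGmod
  -- build the circle homeomorphism
  haveI : Fact ((0:ℝ) < 2*π) := ⟨by positivity⟩
  have h2π : (2*π) ≠ 0 := by positivity
  have hcoeeq : ∀ x y : ℝ, (∃ k : ℤ, x - y = k * (2*π)) →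
      ((x : AddCircle (2*π)) = (y : AddCircle (2*π))) := by
    rintro x y ⟨k, hk⟩
    rw [QuotientAddGroup.eq]
    refine AddSubgroup.mem_zmultiples_iff.2 ⟨-k, ?_⟩
    rw [zsmul_eq_mul]
    push_cast
    linarith
  set f0 : ℝ → AddCircle (2*π) := fun x => (((2*π*(Φ (x / (2*π)))) : ℝ) : AddCircle (2*π))
    with hf0
  set Qmap : AddCircle (2*π) → AddCircle (2*π) := AddCircle.liftIco (2*π) 0 f0 with hQdef
  have hQcoe : ∀ x : ℝ, Qmap ((x : ℝ) : AddCircle (2*π)) = f0 x := by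
    intro x
    have h1 : (0:ℝ) ≤ x - ⌊x / (2*π)⌋ * (2*π) := by
      have := Int.floor_le (x / (2*π))
      have h2 : (⌊x / (2*π)⌋:ℝ) * (2*π) ≤ x := by
        rw [← le_div_iff₀ (by positivity : (0:ℝ) < 2*π)]
        exact this
      linarith
    have h2 : x - ⌊x / (2*π)⌋ * (2*π) < 2*π := by
      have := Int.lt_floor_add_one (x / (2*π))
      have h3 : x < ((⌊x / (2*π)⌋:ℝ) + 1) * (2*π) := by
        rw [← div_lt_iff₀ (by positivity : (0:ℝ) < 2*π)]
        exact this
      nlinarith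
    have hy : (x - ⌊x / (2*π)⌋ * (2*π)) ∈ Ico (0:ℝ) (0 + 2*π) := by
      rw [zero_add]; exact ⟨h1, h2⟩
    have hxy : ((x : ℝ) : AddCircle (2*π)) = ((x - ⌊x / (2*π)⌋ * (2*π) : ℝ) : AddCircle (2*π)) :=
      hcoeeq _ _ ⟨⌊x / (2*π)⌋, by ring⟩
    rw [hQdef, hxy, AddCircle.liftIco_coe_apply hy]
    -- now f0 (x - n*2π) = f0 x
    rw [hf0]
    simp only []
    apply hcoeeq
    refine ⟨-⌊x / (2*π)⌋, ?_⟩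
    have harg : (x - ⌊x / (2*π)⌋ * (2*π)) / (2*π) = x / (2*π) + (-⌊x / (2*π)⌋ : ℤ) := by
      field_simp
      push_cast
      ring
    rw [harg, hΦint (x / (2*π)) (-⌊x / (2*π)⌋)]
    push_cast
    ring
  have hQcont : Continuous Qmap := by
    rw [hQdef]
    apply AddCircle.liftIco_continuous
    · rw [hf0]
      simp only [zero_add]
      apply hcoeeq
      refine ⟨-1, ?_⟩
      rw [show (2*π) / (2*π) = (1:ℝ) from div_self h2π,
        show (0:ℝ) / (2*π) = 0 from zero_div _,
        show (1:ℝ) = 0 + 1 by ring, hΦper 0]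
      push_cast
      ring
    · apply Continuous.continuousOn
      exact (AddCircle.continuous_mk' (2*π)).comp
        (continuous_const.mul (hΦcont.comp (continuous_id.div_const _)))
  have hQbij : Function.Bijective Qmap := by
    constructor
    · intro z w h
      induction z using QuotientAddGroup.induction_on with | H x =>
      induction w using QuotientAddGroup.induction_on with | H y =>
      rw [hQcoe x, hQcoe y, hf0] at h
      simp only [] at h
      rw [QuotientAddGroup.eq] at h
      obtain ⟨k, hk⟩ := AddSubgroup.mem_zmultiples_iff.1 h
      rw [zsmul_eq_mul] at hk
      have hΦeq : Φ (y / (2*π)) = Φ (x / (2*π) + k) := by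
        rw [hΦint (x / (2*π)) k]
        have : (k:ℝ) * (2*π) = -(2*π*(Φ (x / (2*π)))) + 2*π*(Φ (y / (2*π))) := hk
        have h2 : Φ (y / (2*π)) - Φ (x / (2*π)) = k := by
          have h4 : (2*π) * (Φ (y / (2*π)) - Φ (x / (2*π)) - (k:ℝ)) = 0 := by linarith
          rcases mul_eq_zero.1 h4 with h5 | h5
          · exact absurd h5 h2π
          · linarith
        linarith
      have := hΦmono.injective hΦeq
      apply hcoeeq
      refine ⟨-k, ?_⟩
      have : y / (2*π) = x / (2*π) + k := this
      field_simp at this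
      push_cast
      linarith
    · intro z
      induction z using QuotientAddGroup.induction_on with | H y =>
      obtain ⟨x, hx⟩ := hΦsurj (y / (2*π))
      refine ⟨((2*π*x : ℝ) : AddCircle (2*π)), ?_⟩
      rw [hQcoe, hf0]
      simp only []
      rw [show (2*π*x) / (2*π) = x by field_simp, hx]
      congr 1
      field_simp
  set hc' : AddCircle (2*π) ≃ₜ Circle := AddCircle.homeomorphCircle' with hhc
  set φequiv : Circle ≃ Circle :=
    Equiv.ofBijective (fun z => hc' (Qmap (hc'.symm z)))
      (hc'.bijective.comp (hQbij.comp hc'.symm.bijective)) with hφe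
  have hφcont : Continuous ⇑φequiv :=
    hc'.continuous.comp (hQcont.comp hc'.symm.continuous)
  set φ : Circle ≃ₜ Circle := hφcont.homeoOfEquivCompactToT2 with hφdef
  have hφ_apply : ∀ z : Circle, φ z = hc' (Qmap (hc'.symm z)) := fun z => rfl
  have hφ_exp : ∀ x : ℝ, φ (Circle.exp (2*π*x)) = Circle.exp (2*π*(Φ x)) := by
    intro x
    rw [hφ_apply]
    have h1 : hc'.symm (Circle.exp (2*π*x)) = ((2*π*x : ℝ) : AddCircle (2*π)) := by
      rw [hhc, ← AddCircle.homeomorphCircle'_apply_mk (2*π*x)]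
      exact Homeomorph.symm_apply_apply _ _
    rw [h1, hQcoe, hf0]
    simp only []
    rw [show (2*π*x) / (2*π) = x by field_simp]
    rw [hhc]
    exact AddCircle.homeomorphCircle'_apply_mk _
  refine ⟨φ, Or.inl ⟨Φ, hΦmono, ⟨BΦ, hBΦfin, hBΦaff⟩, ?_, ?_⟩, ?_⟩
  · exact fun x => hφ_exp x
  · exact fun x => hΦper x
  · intro z
    obtain ⟨x, hx⟩ : ∃ x : ℝ, Circle.exp (2*π*x) = φ.symm z := by
      refine ⟨Complex.arg ((φ.symm z) : ℂ) / (2*π), ?_⟩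
      rw [show 2*π*(Complex.arg ((φ.symm z) : ℂ) / (2*π)) = Complex.arg ((φ.symm z) : ℂ) by
        field_simp]
      exact Circle.exp_arg _
    have hstep1 : (Circle.exp (2*π*x))⁻¹ = Circle.exp (2*π*(-x)) := by
      rw [show (2*π*(-x)) = -(2*π*x) by ring, Circle.exp_neg]
    calc τ z = τ (φ (φ.symm z)) := by rw [Homeomorph.apply_symm_apply]
    _ = τ (φ (Circle.exp (2*π*x))) := by rw [hx]
    _ = τ (Circle.exp (2*π*(Φ x))) := by rw [hφ_exp]
    _ = Circle.exp (2*π*(G (Φ x))) := hGexp _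
    _ = Circle.exp (2*π*(Φ (-x))) := by rw [hkey]
    _ = φ (Circle.exp (2*π*(-x))) := (hφ_exp _).symm
    _ = φ ((Circle.exp (2*π*x))⁻¹) := by rw [hstep1]
    _ = φ ((φ.symm z)⁻¹) := by rw [hx]
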